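/- The following DELKh-formulas and schemata are valid for all PL-formulas α, β: (i) Kh ⊥ ↔ ⊥; (ii) Kh(α∨β) ↔ (Kh α ∨ Kh β); (iii) Kh(α∧β) ↔ (Kh α ∧ Kh β); (iv) Kh(α→β) ↔ K□(Kh α → Kh β). -/

import Mathlib

/-- Formulas of the propositional language `PL` over atoms `P`. -/
inductive PLForm (P : Type) : Type
  | atom : P → PLForm P
  | bot  : PLForm P
  | and  : PLForm P → PLForm P → PLForm P
  | or   : PLForm P → PLForm P → PLForm P
  | imp  : PLForm P → PLForm P → PLForm P

/-- `¬α` abbreviates `α → ⊥`. -/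
def PLForm.neg {P : Type} (α : PLForm P) : PLForm P := α.imp .bot

/-- The resolution space `S(α)`, realized as a type: `S(p)` and `S(⊥)` are
singletons, `S(α∨β)` is the disjoint union, `S(α∧β)` the product, and
`S(α→β)` the full function space. -/
def RS (P : Type) : PLForm P → Type
  | .atom _  => Unit
  | .bot     => Unit
  | .or a b  => RS P a ⊕ RS P b
  | .and a b => RS P a × RS P b
  | .imp a b => RS P a → RS P b

/-- An epistemic (information) model over atoms `P` with worlds `W`:
`W` is nonempty and `V` a valuation. -/
structure Model (P W : Type) where
  ne : Nonempty W
  V : W → Set P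

/-- The actual resolutions `R(w,α) ⊆ S(α)` at a world `w`. -/
def Res {P W : Type} (M : Model P W) (w : W) : (α : PLForm P) → Set (RS P α)
  | .atom p  => {_u : Unit | p ∈ M.V w}
  | .bot     => ∅
  | .or a b  => (Sum.inl '' Res M w a) ∪ (Sum.inr '' Res M w b)
  | .and a b => (Res M w a) ×ˢ (Res M w b)
  | .imp a b => {f : RS P a → RS P b | f '' Res M w a ⊆ Res M w b}

/-- Formulas of the dynamic epistemic language `DELKh`. -/
inductive DForm (P : Type) : Type
  | atom : P → DForm P
  | bot  : DForm P
  | and  : DForm P → DForm P → DForm P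
  | or   : DForm P → DForm P → DForm P
  | imp  : DForm P → DForm P → DForm P
  | K    : DForm P → DForm P
  | box  : DForm P → DForm P
  | kh   : PLForm P → DForm P

def DForm.neg {P : Type} (φ : DForm P) : DForm P := φ.imp .bot
def DForm.dia {P : Type} (φ : DForm P) : DForm P := (DForm.box φ.neg).neg
def DForm.biImp {P : Type} (φ ψ : DForm P) : DForm P := (φ.imp ψ).and (ψ.imp φ)

/-- Embedding of `PL` into `DELKh`. -/
def PLForm.toD {P : Type} : PLForm P → DForm P
  | .atom p  => .atom p
  | .bot     => .bot
  | .and a b => (toD a).and (toD b)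
  | .or a b  => (toD a).or (toD b)
  | .imp a b => (toD a).imp (toD b)

/-- The submodel of `M` determined by a nonempty set `s` of worlds,
with the restricted valuation. -/
def Model.restrict {P W : Type} (M : Model P W) (s : Set W) (h : s.Nonempty) :
    Model P s :=
  { ne := ⟨⟨h.choose, h.choose_spec⟩⟩, V := fun w => M.V w.1 }

/-- Satisfaction of `DELKh`-formulas at a pointed model `(M,w)`. -/
def Sat (P : Type) : (W : Type) → Model P W → W → DForm P → Prop
  | _, M, w, .atom p  => p ∈ M.V w
  | _, _, _, .bot     => False
  | W, M, w, .and a b => Sat P W M w a ∧ Sat P W M w b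
  | W, M, w, .or a b  => Sat P W M w a ∨ Sat P W M w b
  | W, M, w, .imp a b => Sat P W M w a → Sat P W M w b
  | W, M, _, .K φ     => ∀ v : W, Sat P W M v φ
  | W, M, w, .box φ   =>
      ∀ (s : Set W) (h : w ∈ s), Sat P s (M.restrict s ⟨w, h⟩) ⟨w, h⟩ φ
  | W, M, _, .kh α    => ∃ x : RS P α, ∀ v : W, x ∈ Res M v α

/-- A `DELKh`-formula is valid if it holds at every pointed model. -/
def Valid {P : Type} (φ : DForm P) : Prop :=
  ∀ (W : Type) (M : Model P W) (w : W), Sat P W M w φ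

/-- Semantic entailment from a set of `DELKh`-formulas. -/
def EntailsSet {P : Type} (Γ : Set (DForm P)) (φ : DForm P) : Prop :=
  ∀ (W : Type) (M : Model P W) (w : W),
    (∀ ψ ∈ Γ, Sat P W M w ψ) → Sat P W M w φ

/-- Classical satisfaction of `PL`-formulas at a pointed model. -/
def PLSat {P W : Type} (M : Model P W) (w : W) : PLForm P → Prop
  | .atom p  => p ∈ M.V w
  | .bot     => False
  | .and a b => PLSat M w a ∧ PLSat M w b
  | .or a b  => PLSat M w a ∨ PLSat M w b
  | .imp a b => PLSat M w a → PLSat M w b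

/-- Inquisitive support of `PL`-formulas at a state `s` of a model `M`. -/
def Support (P W : Type) (M : Model P W) : Set W → PLForm P → Prop
  | s, .atom p  => ∀ w ∈ s, p ∈ M.V w
  | s, .bot     => s = ∅
  | s, .and a b => Support P W M s a ∧ Support P W M s b
  | s, .or a b  => Support P W M s a ∨ Support P W M s b
  | s, .imp a b => ∀ t ⊆ s, Support P W M t a → Support P W M t b


theorem RS_nonempty (P : Type) : ∀ α : PLForm P, Nonempty (RS P α)
  | .atom _ => ⟨()⟩
  | .bot => ⟨()⟩
  | .or a _ => (RS_nonempty P a).elim fun x => ⟨Sum.inl x⟩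
  | .and a b => (RS_nonempty P a).elim fun x => (RS_nonempty P b).elim fun y => ⟨(x, y)⟩
  | .imp _ b => (RS_nonempty P b).elim fun y => ⟨fun _ => y⟩

theorem res_restrict {P W : Type} (M : Model P W) (s : Set W) (h : s.Nonempty)
    (v : s) : ∀ α : PLForm P, Res (M.restrict s h) v α = Res M v.1 α
  | .atom p => rfl
  | .bot => rfl
  | .or a b => by simp [Res, res_restrict M s h v a, res_restrict M s h v b]
  | .and a b => by simp [Res, res_restrict M s h v a, res_restrict M s h v b]; rfl
  | .imp a b => by simp [Res, res_restrict M s h v a, res_restrict M s h v b]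

/-- the reduction schemata for `Kh` are valid:
`Kh ⊥ ↔ ⊥`, `Kh(α∨β) ↔ Kh α ∨ Kh β`, `Kh(α∧β) ↔ Kh α ∧ Kh β`, and
`Kh(α→β) ↔ K□(Kh α → Kh β)`. -/
theorem kh_reduction_valid {P : Type} [Countable P] :
    Valid ((DForm.kh (P := P) .bot).biImp .bot) ∧
    (∀ α β : PLForm P,
      Valid ((DForm.kh (α.or β)).biImp ((DForm.kh α).or (DForm.kh β)))) ∧
    (∀ α β : PLForm P,
      Valid ((DForm.kh (α.and β)).biImp ((DForm.kh α).and (DForm.kh β)))) ∧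
    (∀ α β : PLForm P,
      Valid ((DForm.kh (α.imp β)).biImp
        (DForm.K (DForm.box ((DForm.kh α).imp (DForm.kh β)))))) := by
  refine ⟨?_, ?_, ?_, ?_⟩
  · intro W M w
    refine ⟨?_, fun h => h.elim⟩
    rintro ⟨x, hx⟩
    obtain ⟨v⟩ := M.ne
    exact hx v
  · intro α β W M w
    constructor
    · rintro ⟨x | x, hx⟩
      · refine Or.inl ⟨x, fun v => ?_⟩
        rcases hx v with ⟨z, hz, hzz⟩ | ⟨z, hz, hzz⟩
        · cases hzz; exact hz
        · exact absurd hzz (by simp)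
      · refine Or.inr ⟨x, fun v => ?_⟩
        rcases hx v with ⟨z, hz, hzz⟩ | ⟨z, hz, hzz⟩
        · exact absurd hzz (by simp)
        · cases hzz; exact hz
    · rintro (⟨x, hx⟩ | ⟨x, hx⟩)
      · exact ⟨Sum.inl x, fun v => Or.inl ⟨x, hx v, rfl⟩⟩
      · exact ⟨Sum.inr x, fun v => Or.inr ⟨x, hx v, rfl⟩⟩
  · intro α β W M w
    constructor
    · rintro ⟨⟨x, y⟩, hxy⟩
      exact ⟨⟨x, fun v => (hxy v).1⟩, ⟨y, fun v => (hxy v).2⟩⟩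
    · rintro ⟨⟨x, hx⟩, ⟨y, hy⟩⟩
      exact ⟨(x, y), fun v => ⟨hx v, hy v⟩⟩
  · intro α β W M w
    constructor
    · rintro ⟨f, hf⟩ v s hvs ⟨x, hx⟩
      refine ⟨f x, fun u => ?_⟩
      refine (Set.ext_iff.mp (res_restrict M s ⟨v, hvs⟩ u β) (f x)).mpr ?_
      apply hf u.1
      refine ⟨x, ?_, rfl⟩
      have := hx u
      exact (Set.ext_iff.mp (res_restrict M s ⟨v, hvs⟩ u α) x).mp this
    · intro h
      have key : ∀ x : RS P α, ∃ y : RS P β,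
          ∀ v : W, x ∈ Res M v α → y ∈ Res M v β := by
        intro x
        by_cases hne : ∃ v : W, x ∈ Res M v α
        · obtain ⟨v, hv⟩ := hne
          have hs : v ∈ {u : W | x ∈ Res M u α} := hv
          obtain ⟨y, hy⟩ := h v {u : W | x ∈ Res M u α} hs
            ⟨x, fun u => by exact (Set.ext_iff.mp (res_restrict M _ ⟨v, hs⟩ u α) x).mpr u.2⟩
          refine ⟨y, fun u hu => ?_⟩
          have := hy ⟨u, hu⟩
          exact (Set.ext_iff.mp (res_restrict M _ ⟨v, hs⟩ ⟨u, hu⟩ β) y).mp this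
        · obtain ⟨y⟩ := RS_nonempty P β
          exact ⟨y, fun v hv => absurd ⟨v, hv⟩ hne⟩
      choose f hf using key
      refine ⟨f, fun v => ?_⟩
      rintro z ⟨x, hx, rfl⟩
      exact hf x v hx
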